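/- Consider Discounted HEDGE with K ≥ 1 experts, β ∈ (0,1), γ ∈ (0,1], initial weights w_k[1] = W > 0 for all k, losses l^{(k)}[n] ∈ [0,1], weight recurrence w_k[n+1] = (w_k[n])^{γ} · β^{l^{(k)}[n]}, probabilities p^{(k)}[n] = (w_k[n])^{γ} / Σ_{j=1}^{K} (w_j[n])^{γ}, expert losses L_{k,N}(γ) = Σ_{n=1}^{N} γ^{N−n} l^{(k)}[n], and predictor loss L_N(γ) = Σ_{n=1}^{N} γ^{N−n} Σ_{k=1}^{K} p^{(k)}[n] l^{(k)}[n]. Assume the anti-monotonicity condition: for every n and all j, k, if w_j[n] ≤ w_k[n] then l^{(j)}[n] ≥ l^{(k)}[n]. Then for every expert k* (in particular the one minimizing L_{k,N}(γ)) and every N ≥ 1, L_N(γ) ≤ (ln(1/β)/(1−β)) · L_{k*,N}(γ) + (ln K)/(1−β). -/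

import Mathlib

private lemma hedge_shift (γ : ℝ) (f : ℕ → ℝ) (n : ℕ) :
    ∑ m ∈ Finset.Icc 1 (n+1), γ ^ (n+1-m) * f m
      = γ * ∑ m ∈ Finset.Icc 1 n, γ ^ (n-m) * f m + f (n+1) := by
  rw [Finset.sum_Icc_succ_top (Nat.le_add_left 1 n), Nat.sub_self, pow_zero, one_mul,
    Finset.mul_sum]
  congr 1
  refine Finset.sum_congr rfl fun m hm => ?_
  have hm' : m ≤ n := (Finset.mem_Icc.mp hm).2
  rw [show n + 1 - m = (n - m) + 1 from by omega, pow_succ]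
  ring

private lemma hedge_bernoulli {β x : ℝ} (hβ0 : 0 < β) (hβ1 : β < 1)
    (hx0 : 0 ≤ x) (hx1 : x ≤ 1) : β ^ x ≤ 1 - (1 - β) * x := by
  have h := rpow_one_add_le_one_add_mul_self (s := β - 1) (by linarith) hx0 hx1
  have hb : (1 : ℝ) + (β - 1) = β := by ring
  rw [hb] at h
  linarith

private lemma hedge_pow_mean (K : ℕ) (hK : 1 ≤ K) {γ : ℝ} (hγ0 : 0 < γ) (hγ1 : γ ≤ 1)
    (x : ℕ → ℝ) (hx : ∀ j ∈ Finset.Icc 1 K, 0 < x j) :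
    ∑ j ∈ Finset.Icc 1 K, x j ^ γ
      ≤ (K : ℝ) * (((K : ℝ)⁻¹ * ∑ j ∈ Finset.Icc 1 K, x j) ^ γ) := by
  have hKpos : (0 : ℝ) < K := by exact_mod_cast hK
  have hp : (1 : ℝ) ≤ 1 / γ := by rw [le_div_iff₀ hγ0]; simpa using hγ1
  have hw' : ∑ _j ∈ Finset.Icc 1 K, (K : ℝ)⁻¹ = 1 := by
    rw [Finset.sum_const, Nat.card_Icc, nsmul_eq_mul]
    push_cast
    field_simp
  have h := Real.arith_mean_le_rpow_mean (Finset.Icc 1 K) (fun _ => (K : ℝ)⁻¹)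
    (fun j => x j ^ γ) (fun i _ => by positivity) hw'
    (fun i hi => (Real.rpow_pos_of_pos (hx i hi) γ).le) hp
  have e1 : ∀ j ∈ Finset.Icc 1 K, (K : ℝ)⁻¹ * (x j ^ γ) ^ (1/γ) = (K : ℝ)⁻¹ * x j := by
    intro j hj
    rw [← Real.rpow_mul (hx j hj).le, mul_one_div_cancel hγ0.ne', Real.rpow_one]
  rw [Finset.sum_congr rfl e1, one_div_one_div] at h
  rw [← Finset.mul_sum, ← Finset.mul_sum] at h
  calc ∑ j ∈ Finset.Icc 1 K, x j ^ γ
      = (K : ℝ) * ((K : ℝ)⁻¹ * ∑ j ∈ Finset.Icc 1 K, x j ^ γ) := by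
        field_simp
    _ ≤ (K : ℝ) * (((K : ℝ)⁻¹ * ∑ j ∈ Finset.Icc 1 K, x j) ^ γ) :=
        mul_le_mul_of_nonneg_left h hKpos.le

/-- loss bound of Discounted HEDGE against any expert `k*` under the
anti-monotonicity condition:
`L_N(γ) ≤ (ln(1/β)/(1-β)) * L_{k*,N}(γ) + ln K / (1-β)`. -/
theorem discounted_hedge_loss_bound
    (K : ℕ) (hK : 1 ≤ K) (β γ W : ℝ)
    (hβ : β ∈ Set.Ioo (0 : ℝ) 1) (hγ : γ ∈ Set.Ioc (0 : ℝ) 1) (hW : 0 < W)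
    (w l : ℕ → ℕ → ℝ)
    (hl : ∀ k ∈ Finset.Icc 1 K, ∀ n, 1 ≤ n → l k n ∈ Set.Icc (0 : ℝ) 1)
    (hw1 : ∀ k ∈ Finset.Icc 1 K, w k 1 = W)
    (hrec : ∀ k ∈ Finset.Icc 1 K, ∀ n, 1 ≤ n →
      w k (n + 1) = (w k n) ^ γ * β ^ (l k n))
    (hanti : ∀ n, 1 ≤ n → ∀ j ∈ Finset.Icc 1 K, ∀ k ∈ Finset.Icc 1 K,
      w j n ≤ w k n → l k n ≤ l j n)
    (kstar : ℕ) (hkstar : kstar ∈ Finset.Icc 1 K)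
    (N : ℕ) (hN : 1 ≤ N) :
    ∑ n ∈ Finset.Icc 1 N, γ ^ (N - n) *
        ∑ k ∈ Finset.Icc 1 K,
          ((w k n) ^ γ / ∑ j ∈ Finset.Icc 1 K, (w j n) ^ γ) * l k n ≤
      (Real.log (1 / β) / (1 - β)) *
          (∑ n ∈ Finset.Icc 1 N, γ ^ (N - n) * l kstar n) +
        Real.log K / (1 - β) := by
  obtain ⟨hβ0, hβ1⟩ := hβ
  obtain ⟨hγ0, hγ1⟩ := hγ
  have h1β : (0 : ℝ) < 1 - β := by linarith
  have hKpos : (0 : ℝ) < K := by exact_mod_cast hK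
  have hne : (Finset.Icc 1 K).Nonempty := Finset.nonempty_Icc.mpr hK
  -- positivity of weights
  have hwpos : ∀ n, 1 ≤ n → ∀ k ∈ Finset.Icc 1 K, 0 < w k n := by
    intro n hn
    induction n, hn using Nat.le_induction with
    | base => intro k hk; rw [hw1 k hk]; exact hW
    | succ n hn ih =>
        intro k hk
        rw [hrec k hk n hn]
        exact mul_pos (Real.rpow_pos_of_pos (ih k hk) γ) (Real.rpow_pos_of_pos hβ0 _)
  have hΦpos : ∀ n, 1 ≤ n → 0 < ∑ k ∈ Finset.Icc 1 K, w k n := fun n hn =>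
    Finset.sum_pos (fun k hk => hwpos n hn k hk) hne
  have hSpos : ∀ n, 1 ≤ n → 0 < ∑ j ∈ Finset.Icc 1 K, (w j n) ^ γ := fun n hn =>
    Finset.sum_pos (fun j hj => Real.rpow_pos_of_pos (hwpos n hn j hj) γ) hne
  -- instantaneous predictor loss bounds
  have hL0 : ∀ n, 1 ≤ n →
      0 ≤ ∑ k ∈ Finset.Icc 1 K,
        ((w k n) ^ γ / ∑ j ∈ Finset.Icc 1 K, (w j n) ^ γ) * l k n := by
    intro n hn
    refine Finset.sum_nonneg fun k hk => mul_nonneg ?_ (hl k hk n hn).1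
    exact div_nonneg (Real.rpow_pos_of_pos (hwpos n hn k hk) γ).le (hSpos n hn).le
  have hL1 : ∀ n, 1 ≤ n →
      (∑ k ∈ Finset.Icc 1 K,
        ((w k n) ^ γ / ∑ j ∈ Finset.Icc 1 K, (w j n) ^ γ) * l k n) ≤ 1 := by
    intro n hn
    have h1 : ∀ k ∈ Finset.Icc 1 K,
        ((w k n) ^ γ / ∑ j ∈ Finset.Icc 1 K, (w j n) ^ γ) * l k n
          ≤ (w k n) ^ γ / ∑ j ∈ Finset.Icc 1 K, (w j n) ^ γ := by
      intro k hk
      have hp : 0 ≤ (w k n) ^ γ / ∑ j ∈ Finset.Icc 1 K, (w j n) ^ γ :=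
        div_nonneg (Real.rpow_pos_of_pos (hwpos n hn k hk) γ).le (hSpos n hn).le
      nlinarith [(hl k hk n hn).2, (hl k hk n hn).1]
    calc (∑ k ∈ Finset.Icc 1 K,
          ((w k n) ^ γ / ∑ j ∈ Finset.Icc 1 K, (w j n) ^ γ) * l k n)
        ≤ ∑ k ∈ Finset.Icc 1 K, (w k n) ^ γ / ∑ j ∈ Finset.Icc 1 K, (w j n) ^ γ :=
          Finset.sum_le_sum h1
      _ = 1 := by rw [← Finset.sum_div, div_self (hSpos n hn).ne']
  -- one-step potential bound
  have hstep : ∀ n, 1 ≤ n →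
      Real.log (∑ k ∈ Finset.Icc 1 K, w k (n+1))
        ≤ γ * Real.log (∑ k ∈ Finset.Icc 1 K, w k n) + (1 - γ) * Real.log K
          - (1 - β) * ∑ k ∈ Finset.Icc 1 K,
              ((w k n) ^ γ / ∑ j ∈ Finset.Icc 1 K, (w j n) ^ γ) * l k n := by
    intro n hn
    set Ln := ∑ k ∈ Finset.Icc 1 K,
      ((w k n) ^ γ / ∑ j ∈ Finset.Icc 1 K, (w j n) ^ γ) * l k n with hLn
    have hSL : (∑ j ∈ Finset.Icc 1 K, (w j n) ^ γ) * Ln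
        = ∑ k ∈ Finset.Icc 1 K, (w k n) ^ γ * l k n := by
      rw [hLn]
      simp only [div_mul_eq_mul_div]
      rw [← Finset.sum_div, mul_div_cancel₀ _ (hSpos n hn).ne']
    have hup : (∑ k ∈ Finset.Icc 1 K, w k (n+1))
        ≤ (∑ j ∈ Finset.Icc 1 K, (w j n) ^ γ) * (1 - (1 - β) * Ln) := by
      have e : (∑ k ∈ Finset.Icc 1 K, w k (n+1))
          = ∑ k ∈ Finset.Icc 1 K, (w k n) ^ γ * β ^ (l k n) :=
        Finset.sum_congr rfl fun k hk => hrec k hk n hn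
      rw [e]
      have h2 : ∀ k ∈ Finset.Icc 1 K,
          (w k n) ^ γ * β ^ (l k n) ≤ (w k n) ^ γ * (1 - (1 - β) * l k n) := by
        intro k hk
        exact mul_le_mul_of_nonneg_left
          (hedge_bernoulli hβ0 hβ1 (hl k hk n hn).1 (hl k hk n hn).2)
          (Real.rpow_pos_of_pos (hwpos n hn k hk) γ).le
      calc ∑ k ∈ Finset.Icc 1 K, (w k n) ^ γ * β ^ (l k n)
          ≤ ∑ k ∈ Finset.Icc 1 K, (w k n) ^ γ * (1 - (1 - β) * l k n) :=
            Finset.sum_le_sum h2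
        _ = (∑ j ∈ Finset.Icc 1 K, (w j n) ^ γ)
              - (1 - β) * ∑ k ∈ Finset.Icc 1 K, (w k n) ^ γ * l k n := by
            rw [Finset.mul_sum, ← Finset.sum_sub_distrib]
            refine Finset.sum_congr rfl fun k hk => ?_
            ring
        _ = (∑ j ∈ Finset.Icc 1 K, (w j n) ^ γ) * (1 - (1 - β) * Ln) := by
            linear_combination (1 - β) * hSL
    have hLpos : 0 < 1 - (1 - β) * Ln := by
      have h1 := hL1 n hn
      rw [← hLn] at h1
      nlinarith
    have hub2 : (∑ k ∈ Finset.Icc 1 K, w k (n+1))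
        ≤ ((K : ℝ) * (((K : ℝ)⁻¹ * ∑ k ∈ Finset.Icc 1 K, w k n) ^ γ))
            * (1 - (1 - β) * Ln) := by
      refine hup.trans (mul_le_mul_of_nonneg_right ?_ hLpos.le)
      exact hedge_pow_mean K hK hγ0 hγ1 (fun j => w j n) (fun j hj => hwpos n hn j hj)
    have hΦ1 := hΦpos (n+1) (by omega)
    have hΦn := hΦpos n hn
    have hinv : (0 : ℝ) < (K : ℝ)⁻¹ * ∑ k ∈ Finset.Icc 1 K, w k n :=
      mul_pos (inv_pos.mpr hKpos) hΦn
    have hlog1 : Real.log (∑ k ∈ Finset.Icc 1 K, w k (n+1))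
        ≤ Real.log (((K : ℝ) * (((K : ℝ)⁻¹ * ∑ k ∈ Finset.Icc 1 K, w k n) ^ γ))
            * (1 - (1 - β) * Ln)) := Real.log_le_log hΦ1 hub2
    have e2 : Real.log (((K : ℝ) * (((K : ℝ)⁻¹ * ∑ k ∈ Finset.Icc 1 K, w k n) ^ γ))
            * (1 - (1 - β) * Ln))
        = Real.log K + γ * (Real.log (∑ k ∈ Finset.Icc 1 K, w k n) - Real.log K)
            + Real.log (1 - (1 - β) * Ln) := by
      rw [Real.log_mul (by positivity) hLpos.ne',
        Real.log_mul hKpos.ne' (Real.rpow_pos_of_pos hinv γ).ne',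
        Real.log_rpow hinv, Real.log_mul (inv_pos.mpr hKpos).ne' hΦn.ne', Real.log_inv]
      ring
    have hlog2 : Real.log (1 - (1 - β) * Ln) ≤ -((1 - β) * Ln) := by
      have := Real.log_le_sub_one_of_pos hLpos
      linarith
    rw [e2] at hlog1
    linarith
  -- iterated bound
  have hiter : ∀ M, 1 ≤ M →
      Real.log (∑ k ∈ Finset.Icc 1 K, w k (M+1))
        ≤ γ ^ M * Real.log (∑ k ∈ Finset.Icc 1 K, w k 1)
          + (1 - γ ^ M) * Real.log K
          - (1 - β) * ∑ n ∈ Finset.Icc 1 M, γ ^ (M - n) *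
              ∑ k ∈ Finset.Icc 1 K,
                ((w k n) ^ γ / ∑ j ∈ Finset.Icc 1 K, (w j n) ^ γ) * l k n := by
    intro M hM
    induction M, hM using Nat.le_induction with
    | base =>
        have h := hstep 1 le_rfl
        rw [Finset.Icc_self, Finset.sum_singleton]
        simp only [pow_one, Nat.sub_self, pow_zero, one_mul]
        linarith
    | succ M hM ih =>
        have h := hstep (M+1) (by omega)
        have hsum := hedge_shift γ (fun n => ∑ k ∈ Finset.Icc 1 K,
          ((w k n) ^ γ / ∑ j ∈ Finset.Icc 1 K, (w j n) ^ γ) * l k n) M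
        rw [hsum]
        have ihγ := mul_le_mul_of_nonneg_left ih hγ0.le
        calc Real.log (∑ k ∈ Finset.Icc 1 K, w k (M+1+1))
            ≤ γ * Real.log (∑ k ∈ Finset.Icc 1 K, w k (M+1)) + (1 - γ) * Real.log K
              - (1 - β) * ∑ k ∈ Finset.Icc 1 K,
                  ((w k (M+1)) ^ γ / ∑ j ∈ Finset.Icc 1 K, (w j (M+1)) ^ γ)
                    * l k (M+1) := h
          _ ≤ γ * (γ ^ M * Real.log (∑ k ∈ Finset.Icc 1 K, w k 1)
                + (1 - γ ^ M) * Real.log K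
                - (1 - β) * ∑ n ∈ Finset.Icc 1 M, γ ^ (M - n) *
                    ∑ k ∈ Finset.Icc 1 K,
                      ((w k n) ^ γ / ∑ j ∈ Finset.Icc 1 K, (w j n) ^ γ) * l k n)
              + (1 - γ) * Real.log K
              - (1 - β) * ∑ k ∈ Finset.Icc 1 K,
                  ((w k (M+1)) ^ γ / ∑ j ∈ Finset.Icc 1 K, (w j (M+1)) ^ γ)
                    * l k (M+1) := by linarith
          _ = γ ^ (M+1) * Real.log (∑ k ∈ Finset.Icc 1 K, w k 1)
              + (1 - γ ^ (M+1)) * Real.log K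
              - (1 - β) * (γ * (∑ n ∈ Finset.Icc 1 M, γ ^ (M - n) *
                    ∑ k ∈ Finset.Icc 1 K,
                      ((w k n) ^ γ / ∑ j ∈ Finset.Icc 1 K, (w j n) ^ γ) * l k n)
                  + ∑ k ∈ Finset.Icc 1 K,
                      ((w k (M+1)) ^ γ / ∑ j ∈ Finset.Icc 1 K, (w j (M+1)) ^ γ)
                        * l k (M+1)) := by ring
  -- closed form for expert kstar's weight
  have hlower : ∀ M, 1 ≤ M →
      w kstar (M+1) = W ^ (γ ^ M)
        * β ^ (∑ n ∈ Finset.Icc 1 M, γ ^ (M - n) * l kstar n) := by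
    intro M hM
    induction M, hM using Nat.le_induction with
    | base =>
        rw [hrec kstar hkstar 1 le_rfl, hw1 kstar hkstar, Finset.Icc_self,
          Finset.sum_singleton]
        norm_num
    | succ M hM ih =>
        rw [hrec kstar hkstar (M+1) (by omega), ih,
          Real.mul_rpow (Real.rpow_pos_of_pos hW _).le (Real.rpow_pos_of_pos hβ0 _).le,
          ← Real.rpow_mul hW.le, ← Real.rpow_mul hβ0.le, mul_assoc,
          ← Real.rpow_add hβ0, hedge_shift γ (fun n => l kstar n) M]
        rw [← pow_succ]
        congr 1
        ring
  -- assemble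
  have hwlog : Real.log (w kstar (N+1))
      = γ ^ N * Real.log W
        + (∑ n ∈ Finset.Icc 1 N, γ ^ (N - n) * l kstar n) * Real.log β := by
    rw [hlower N hN,
      Real.log_mul (Real.rpow_pos_of_pos hW _).ne' (Real.rpow_pos_of_pos hβ0 _).ne',
      Real.log_rpow hW, Real.log_rpow hβ0]
  have hwle : w kstar (N+1) ≤ ∑ k ∈ Finset.Icc 1 K, w k (N+1) :=
    Finset.single_le_sum (fun k hk => (hwpos (N+1) (by omega) k hk).le) hkstar
  have hloglow : Real.log (w kstar (N+1)) ≤ Real.log (∑ k ∈ Finset.Icc 1 K, w k (N+1)) :=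
    Real.log_le_log (hwpos (N+1) (by omega) kstar hkstar) hwle
  have hΦ1eq : γ ^ N * Real.log (∑ k ∈ Finset.Icc 1 K, w k 1)
      = γ ^ N * Real.log K + γ ^ N * Real.log W := by
    have e : (∑ k ∈ Finset.Icc 1 K, w k 1) = (K : ℝ) * W := by
      rw [Finset.sum_congr rfl hw1, Finset.sum_const, Nat.card_Icc, nsmul_eq_mul]
      push_cast; ring
    rw [e, Real.log_mul hKpos.ne' hW.ne']; ring
  have hmain := hiter N hN
  rw [hΦ1eq] at hmain
  have hkey : (1 - β) * ∑ n ∈ Finset.Icc 1 N, γ ^ (N - n) *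
        ∑ k ∈ Finset.Icc 1 K,
          ((w k n) ^ γ / ∑ j ∈ Finset.Icc 1 K, (w j n) ^ γ) * l k n
      ≤ Real.log K
          - (∑ n ∈ Finset.Icc 1 N, γ ^ (N - n) * l kstar n) * Real.log β := by
    have := hloglow.trans hmain
    rw [hwlog] at this
    nlinarith [this]
  have hlogβ : Real.log (1 / β) = -Real.log β := by rw [one_div, Real.log_inv]
  rw [div_mul_eq_mul_div, ← add_div, le_div_iff₀ h1β, hlogβ]
  nlinarith [hkey]
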